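/- Let 𝒰 ⊂ 𝕋^d × ℂ be an open set such that each fiber 𝒰_θ = {z : (θ,z) ∈ 𝒰} is a simply connected domain containing 0, different from ℂ. Then the function R : 𝕋^d → ℝ₊ assigning to θ the conformal radius of 𝒰_θ at 0 is lower semicontinuous. -/

import Mathlib

open Metric Set

open Filter Complex Function
open scoped Topology

/-- An injective holomorphic function has nonvanishing derivative. -/
lemma deriv_ne_zero_of_injOn {f : ℂ → ℂ} {s : Set ℂ} {z₁ : ℂ}
    (hf : AnalyticAt ℂ f z₁) (hs : s ∈ 𝓝 z₁) (hinj : Set.InjOn f s) :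
    deriv f z₁ ≠ 0 := by
  intro hd
  set F : ℂ → ℂ := fun z => f z - f z₁ with hFdef
  have hFa : AnalyticAt ℂ F z₁ := hf.sub analyticAt_const
  have hz₁s : z₁ ∈ s := mem_of_mem_nhds hs
  have hmem : ∀ᶠ z in 𝓝 z₁, z ∈ s := eventually_of_mem hs fun _ hx => hx
  -- `F` is not eventually zero near `z₁`.
  have hne : ¬ ∀ᶠ z in 𝓝 z₁, F z = 0 := by
    intro hev
    have h2 : ∀ᶠ z in 𝓝[≠] z₁, F z = 0 ∧ z ∈ s :=
      (hev.and hmem).filter_mono nhdsWithin_le_nhds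
    obtain ⟨z, ⟨hz0, hzs⟩, hzz⟩ := (h2.and eventually_mem_nhdsWithin).exists
    exact hzz (hinj hzs hz₁s (by simpa [F, sub_eq_zero] using hz0))
  obtain ⟨n, g, hg, hg0, hfg⟩ := hFa.exists_eventuallyEq_pow_smul_nonzero_iff.mpr hne
  -- the order `n` is at least 2
  have hF0 : F z₁ = 0 := sub_self _
  have hFd : deriv F z₁ = 0 := by
    have : deriv F z₁ = deriv f z₁ := by simp [hFdef, deriv_sub_const]
    rw [this, hd]
  match n, hfg with
  | 0, hfg =>
    have := hfg.self_of_nhds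
    simp only [pow_zero, one_smul] at this
    exact hg0 (by rw [← this, hF0])
  | 1, hfg =>
    have hdF : HasDerivAt (fun z => (z - z₁) ^ 1 • g z) (g z₁) z₁ := by
      have := ((hasDerivAt_id z₁).sub_const z₁).mul hg.differentiableAt.hasDerivAt
      simpa [Pi.mul_def] using this
    have : deriv F z₁ = g z₁ := by
      rw [Filter.EventuallyEq.deriv_eq hfg]; exact hdF.deriv
    exact hg0 (by rw [← this, hFd])
  | (k + 2), hfg =>
    set m : ℕ := k + 2 with hm
    have hm2 : 2 ≤ m := by omega
    have hmC : (m : ℂ) ≠ 0 := Nat.cast_ne_zero.mpr (by omega)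
    set c : ℂ := g z₁ with hc
    -- analytic m-th root r of g near z₁
    set r : ℂ → ℂ := fun z => Complex.exp ((Complex.log (g z / c) + Complex.log c) / m) with hr
    have hra : AnalyticAt ℂ r z₁ := by
      have h1 : AnalyticAt ℂ (fun z => g z / c) z₁ := hg.div analyticAt_const hg0
      have h2 : AnalyticAt ℂ (fun z => Complex.log (g z / c)) z₁ := by
        refine h1.clog ?_
        convert Complex.one_mem_slitPlane using 1; exact div_self hg0
      exact ((h2.add analyticAt_const).div analyticAt_const hmC).cexp
    have hrpow : ∀ᶠ z in 𝓝 z₁, r z ^ m = g z := by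
      have hgc : ∀ᶠ z in 𝓝 z₁, g z ≠ 0 := hg.continuousAt.eventually_ne hg0
      filter_upwards [hgc] with z hz
      have h1 : g z / c ≠ 0 := div_ne_zero hz hg0
      rw [hr]
      rw [← Complex.exp_nat_mul, mul_div_cancel₀ _ hmC, Complex.exp_add,
        Complex.exp_log h1, Complex.exp_log hg0, div_mul_cancel₀ _ hg0]
    set ψ : ℂ → ℂ := fun z => (z - z₁) * r z with hψ
    have hψa : AnalyticAt ℂ ψ z₁ := ((analyticAt_id).sub analyticAt_const).mul hra
    have hψF : ∀ᶠ z in 𝓝 z₁, ψ z ^ m = F z := by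
      filter_upwards [hfg, hrpow] with z h1 h2
      rw [hψ]; rw [mul_pow, h2, h1, smul_eq_mul]
    have hrz₁ : r z₁ ≠ 0 := Complex.exp_ne_zero _
    have hdψ : HasDerivAt ψ (r z₁) z₁ := by
      have := ((hasDerivAt_id z₁).sub_const z₁).mul hra.differentiableAt.hasDerivAt
      simpa [Pi.mul_def] using this
    have hstrict : HasStrictDerivAt ψ (r z₁) z₁ := by
      have h1 : HasStrictDerivAt ψ (deriv ψ z₁) z₁ :=
        (hψa.contDiffAt (n := 1)).hasStrictDerivAt one_ne_zero
      rwa [hdψ.deriv] at h1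
    have hmap : map ψ (𝓝 z₁) = 𝓝 (ψ z₁) := hstrict.map_nhds_eq hrz₁
    have hψz₁ : ψ z₁ = 0 := by simp [hψ]
    -- the root of unity
    set ζ : ℂ := Complex.exp (2 * Real.pi * Complex.I / m) with hζ
    have hζm : ζ ^ m = 1 := by
      rw [hζ, ← Complex.exp_nat_mul, mul_div_cancel₀ _ hmC, Complex.exp_two_pi_mul_I]
    have hζ1 : ζ ≠ 1 := by
      rw [hζ]
      intro hcon
      obtain ⟨j, hj⟩ := Complex.exp_eq_one_iff.mp hcon
      have h2pi : (2 * Real.pi * Complex.I : ℂ) ≠ 0 := by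
        simp [Real.pi_ne_zero, Complex.I_ne_zero]
      have h3 : ((1:ℂ)/m) * (2 * Real.pi * Complex.I) = (j:ℂ) * (2 * Real.pi * Complex.I) := by
        rw [← hj]; ring
      have h4 : (1:ℂ)/m = j := mul_right_cancel₀ h2pi h3
      have : (j : ℂ) * m = 1 := by field_simp at h4; linear_combination -h4
      have : (j * (m : ℤ) : ℤ) = 1 := by exact_mod_cast this
      have hdvd : (m : ℤ) ∣ 1 := Dvd.intro_left j this
      have := Int.le_of_dvd one_pos hdvd
      omega
    -- choose a small point w with w and ζ w both in ψ '' U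
    obtain ⟨U, hU, hUsub⟩ := eventually_iff_exists_mem.mp (hψF.and hmem)
    have hUim : ψ '' U ∈ 𝓝 (0:ℂ) := by
      rw [← hψz₁, ← hmap]; exact image_mem_map hU
    have hpre : (fun w : ℂ => ζ * w) ⁻¹' (ψ '' U) ∈ 𝓝 (0:ℂ) := by
      apply (continuous_const.mul continuous_id).continuousAt.preimage_mem_nhds
      simpa using hUim
    have hV : ψ '' U ∩ (fun w : ℂ => ζ * w) ⁻¹' (ψ '' U) ∈ 𝓝 (0:ℂ) :=
      Filter.inter_mem hUim hpre
    have hVev : ∀ᶠ w in 𝓝[≠] (0:ℂ),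
        w ∈ ψ '' U ∩ (fun w : ℂ => ζ * w) ⁻¹' (ψ '' U) :=
      (eventually_of_mem hV fun _ hx => hx).filter_mono nhdsWithin_le_nhds
    obtain ⟨w, ⟨⟨z, hzU, hzw⟩, hwpre⟩, hw0'⟩ := (hVev.and eventually_mem_nhdsWithin).exists
    obtain ⟨z', hz'U, hz'w⟩ := hwpre
    have hw0 : w ≠ 0 := hw0'
    have hFz : F z = w ^ m := by rw [← (hUsub z hzU).1, hzw]
    have hFz' : F z' = w ^ m := by
      have hz'w2 : ψ z' = ζ * w := hz'w
      rw [← (hUsub z' hz'U).1, hz'w2, mul_pow, hζm, one_mul]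
    have hfzz' : f z = f z' := by
      have : F z = F z' := by rw [hFz, hFz']
      simpa [F, sub_left_inj] using this
    have hzz' : z = z' := hinj (hUsub z hzU).2 (hUsub z' hz'U).2 hfzz'
    have hz'w2 : ψ z' = ζ * w := hz'w
    have : ζ * w = w := by rw [← hz'w2, ← hzz', hzw]
    have : ζ = 1 := by
      have h1 : ζ * w = 1 * w := by rw [this, one_mul]
      exact mul_right_cancel₀ hw0 h1
    exact hζ1 this

instance : Fact ((0:ℝ) < 1) := ⟨one_pos⟩

/-- The `d`-dimensional torus `𝕋^d = ℝ^d/ℤ^d`. -/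
abbrev Torus (d : ℕ) := Fin d → AddCircle (1:ℝ)

/-- **Lower semicontinuity of the fiberwise conformal radius.**
If `𝒰 ⊆ 𝕋^d × ℂ` is open with simply connected fibers `𝒰_θ ∋ 0`, `𝒰_θ ≠ ℂ`, and
`h θ : 𝔻 → 𝒰_θ` are the Riemann uniformizations with `h θ 0 = 0`, `(h θ)'(0) = R θ > 0`,
then the conformal radius function `R` is lower semicontinuous. -/
theorem conformal_radius_lsc {d : ℕ} (𝒰 : Set (Torus d × ℂ))
    (hopen : IsOpen 𝒰)
    (hzero : ∀ θ : Torus d, (θ, (0:ℂ)) ∈ 𝒰)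
    (hne : ∀ θ : Torus d, {z : ℂ | (θ, z) ∈ 𝒰} ≠ Set.univ)
    (hconn : ∀ θ : Torus d, IsConnected {z : ℂ | (θ, z) ∈ 𝒰})
    (h : Torus d → ℂ → ℂ) (R : Torus d → ℝ)
    (hhol : ∀ θ : Torus d, DifferentiableOn ℂ (h θ) (ball (0:ℂ) 1))
    (hbij : ∀ θ : Torus d, Set.BijOn (h θ) (ball (0:ℂ) 1) {z : ℂ | (θ, z) ∈ 𝒰})
    (hfix : ∀ θ : Torus d, h θ 0 = 0)
    (hpos : ∀ θ : Torus d, 0 < R θ)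
    (hR : ∀ θ : Torus d, deriv (h θ) 0 = (R θ : ℂ)) :
    LowerSemicontinuous R := by
  intro θ₀ c hc
  have hR0 : (0:ℝ) < R θ₀ := hpos θ₀
  set m : ℝ := max 0 (c / R θ₀) with hmdef
  set ρ : ℝ := (m + 1) / 2 with hρdef
  have hm0 : 0 ≤ m := le_max_left _ _
  have hm1 : m < 1 := max_lt one_pos ((div_lt_one hR0).mpr hc)
  have hρ0 : 0 < ρ := by rw [hρdef]; linarith
  have hρ1 : ρ < 1 := by rw [hρdef]; linarith
  have hcρ : c < ρ * R θ₀ := by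
    have h1 : c / R θ₀ ≤ m := le_max_right _ _
    have h2 : m < ρ := by rw [hρdef]; linarith
    have h3 : c / R θ₀ < ρ := lt_of_le_of_lt h1 h2
    calc c = c / R θ₀ * R θ₀ := by field_simp
    _ < ρ * R θ₀ := by exact mul_lt_mul_of_pos_right h3 hR0
  have hsub : closedBall (0:ℂ) ρ ⊆ ball (0:ℂ) 1 := closedBall_subset_ball hρ1
  set K : Set ℂ := h θ₀ '' closedBall 0 ρ with hKdef
  have hKc : IsCompact K :=
    (isCompact_closedBall _ _).image_of_continuousOn ((hhol θ₀).continuousOn.mono hsub)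
  have hKU : ∀ z ∈ K, (θ₀, z) ∈ 𝒰 := by
    rintro z ⟨x, hx, rfl⟩
    exact (hbij θ₀).mapsTo (hsub hx)
  have tube : ∀ᶠ θ in 𝓝 θ₀, ∀ z ∈ K, (θ, z) ∈ 𝒰 := by
    apply hKc.eventually_forall_of_forall_eventually (x₀ := θ₀)
    intro z hz
    have : ∀ᶠ q : Torus d × ℂ in 𝓝 (θ₀, z), q ∈ 𝒰 :=
      hopen.eventually_mem (hKU z hz)
    exact this
  filter_upwards [tube] with θ hθ
  -- Now show `c < R θ`.
  set Ω : Set ℂ := {z | (θ, z) ∈ 𝒰} with hΩdef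
  have hΩo : IsOpen Ω := hopen.preimage (Continuous.prodMk_right θ)
  set φ : ℂ → ℂ := h θ with hφdef
  have hφa : AnalyticOnNhd ℂ φ (ball 0 1) := (hhol θ).analyticOnNhd isOpen_ball
  have hφinj : Set.InjOn φ (ball 0 1) := (hbij θ).injOn
  have hder : ∀ ζ ∈ ball (0:ℂ) 1, deriv φ ζ ≠ 0 := fun ζ hζ =>
    deriv_ne_zero_of_injOn (hφa ζ hζ) (isOpen_ball.mem_nhds hζ) hφinj
  set inv : ℂ → ℂ := Function.invFunOn φ (ball 0 1) with hinvdef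
  have hinvmem : ∀ w ∈ Ω, inv w ∈ ball (0:ℂ) 1 ∧ φ (inv w) = w := by
    intro w hw
    have him : w ∈ φ '' ball 0 1 := (hbij θ).surjOn hw
    obtain ⟨a, ha, hfa⟩ := him
    have hex : ∃ a ∈ ball (0:ℂ) 1, φ a = w := ⟨a, ha, hfa⟩
    constructor
    · show Function.invFunOn φ (ball 0 1) w ∈ ball (0:ℂ) 1
      exact Function.invFunOn_mem hex
    · show φ (Function.invFunOn φ (ball 0 1) w) = w
      exact Function.invFunOn_eq hex
  set ψ : ℂ → ℂ := fun z => inv (h θ₀ z) with hψdef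
  have hballsub : ball (0:ℂ) ρ ⊆ closedBall 0 ρ := ball_subset_closedBall
  have hmemΩ : ∀ z ∈ ball (0:ℂ) ρ, h θ₀ z ∈ Ω := fun z hz =>
    hθ _ ⟨z, hballsub hz, rfl⟩
  have hmapψ : MapsTo ψ (ball (0:ℂ) ρ) (ball (0:ℂ) 1) := fun z hz =>
    (hinvmem _ (hmemΩ z hz)).1
  -- differentiability of ψ on ball ρ
  have hψd : DifferentiableOn ℂ ψ (ball (0:ℂ) ρ) := by
    intro z₀ hz₀
    apply DifferentiableAt.differentiableWithinAt
    have hz₀1 : z₀ ∈ ball (0:ℂ) 1 := hsub (hballsub hz₀)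
    set w : ℂ := h θ₀ z₀ with hwdef
    have hwΩ : w ∈ Ω := hmemΩ z₀ hz₀
    obtain ⟨hζball, hφζ⟩ := hinvmem w hwΩ
    set ζ : ℂ := inv w with hζdef
    have hstrict : HasStrictDerivAt φ (deriv φ ζ) ζ :=
      ((hφa ζ hζball).contDiffAt (n := 1)).hasStrictDerivAt one_ne_zero
    have hd0 : deriv φ ζ ≠ 0 := hder ζ hζball
    set L : ℂ → ℂ := hstrict.localInverse φ (deriv φ ζ) ζ hd0 with hLdef
    have hLd : HasStrictDerivAt L (deriv φ ζ)⁻¹ (φ ζ) := hstrict.to_localInverse hd0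
    have hLleft : ∀ᶠ x in 𝓝 ζ, L (φ x) = x :=
      (hstrict.hasStrictFDerivAt_equiv hd0).eventually_left_inverse
    have hLright : ∀ᶠ y in 𝓝 (φ ζ), φ (L y) = y :=
      (hstrict.hasStrictFDerivAt_equiv hd0).eventually_right_inverse
    have hLcont : ContinuousAt L (φ ζ) :=
      (hstrict.hasStrictFDerivAt_equiv hd0).localInverse_continuousAt
    have hLζ : L (φ ζ) = ζ := hLleft.self_of_nhds
    -- eventually near w, inv = L
    have hLball : ∀ᶠ y in 𝓝 (φ ζ), L y ∈ ball (0:ℂ) 1 := by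
      have : ∀ᶠ x in 𝓝 (L (φ ζ)), x ∈ ball (0:ℂ) 1 := by
        rw [hLζ]; exact isOpen_ball.eventually_mem hζball
      exact hLcont.eventually this
    have hΩev : ∀ᶠ y in 𝓝 (φ ζ), y ∈ Ω := by
      rw [hφζ]; exact hΩo.eventually_mem hwΩ
    have hinvL : ∀ᶠ y in 𝓝 w, inv y = L y := by
      rw [← hφζ]
      filter_upwards [hLright, hLball, hΩev] with y h1 h2 h3
      exact hφinj (hinvmem y h3).1 h2 (by rw [(hinvmem y h3).2, h1])
    -- transfer along h θ₀
    have hcont : ContinuousAt (h θ₀) z₀ :=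
      ((hhol θ₀).differentiableAt (isOpen_ball.mem_nhds hz₀1)).continuousAt
    have hψeq : ∀ᶠ z in 𝓝 z₀, ψ z = L (h θ₀ z) := by
      have := hcont.eventually hinvL
      filter_upwards [this] with z hz using hz
    have hdiff : DifferentiableAt ℂ (fun z => L (h θ₀ z)) z₀ := by
      have h1 : DifferentiableAt ℂ L w := by
        have := hLd.hasDerivAt.differentiableAt
        rwa [hφζ] at this
      exact h1.comp z₀ ((hhol θ₀).differentiableAt (isOpen_ball.mem_nhds hz₀1))
    exact hdiff.congr_of_eventuallyEq hψeq
  -- ψ 0 = 0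
  have h0ρ : (0:ℂ) ∈ ball (0:ℂ) ρ := mem_ball_self hρ0
  have h01 : (0:ℂ) ∈ ball (0:ℂ) 1 := mem_ball_self one_pos
  have hψ0 : ψ 0 = 0 := by
    have h1 : h θ₀ 0 = 0 := hfix θ₀
    have h2 : φ 0 = 0 := hfix θ
    have : inv (φ 0) = 0 := hφinj.leftInvOn_invFunOn h01
    calc inv (h θ₀ 0) = inv (φ 0) := by rw [h1, h2]
    _ = 0 := this
  -- Schwarz lemma
  have hSch : ‖deriv ψ 0‖ ≤ 1 / ρ := by
    have hmap' : MapsTo ψ (ball (0:ℂ) ρ) (ball (ψ 0) 1) := by rw [hψ0]; exact hmapψ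
    exact Complex.norm_deriv_le_div_of_mapsTo_ball hψd (hmap'.mono_right ball_subset_closedBall) hρ0
  -- chain rule : φ ∘ ψ = h θ₀ near 0
  have hcompev : ∀ᶠ z in 𝓝 (0:ℂ), φ (ψ z) = h θ₀ z := by
    filter_upwards [isOpen_ball.eventually_mem h0ρ] with z hz
    exact (hinvmem _ (hmemΩ z hz)).2
  have hψdiff0 : DifferentiableAt ℂ ψ 0 :=
    (hψd.differentiableAt (isOpen_ball.mem_nhds h0ρ))
  have hφdiff0 : DifferentiableAt ℂ φ (ψ 0) := by
    rw [hψ0]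
    exact (hhol θ).differentiableAt (isOpen_ball.mem_nhds h01)
  have hchain : deriv (h θ₀) 0 = deriv φ (ψ 0) * deriv ψ 0 := by
    rw [← Filter.EventuallyEq.deriv_eq hcompev]
    exact deriv_comp (x := 0) hφdiff0 hψdiff0
  have hkey : (R θ₀ : ℂ) = (R θ : ℂ) * deriv ψ 0 := by
    rw [← hR θ₀, hchain, hψ0]
    congr 1
    exact hR θ
  -- conclude
  have habs : (R θ₀ : ℝ) = R θ * ‖deriv ψ 0‖ := by
    have := congrArg (‖·‖) hkey
    simpa [norm_mul, Complex.norm_real, Real.norm_eq_abs, abs_of_pos (hpos θ₀), abs_of_pos (hpos θ)]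
      using this
  have hineq : R θ₀ ≤ R θ * (1 / ρ) := by
    rw [habs]
    exact mul_le_mul_of_nonneg_left hSch (le_of_lt (hpos θ))
  have hfin : ρ * R θ₀ ≤ R θ := by
    have h2 := mul_le_mul_of_nonneg_right hineq hρ0.le
    have h3 : R θ * (1/ρ) * ρ = R θ := by field_simp
    rw [h3] at h2
    linarith
  exact lt_of_lt_of_le hcρ hfin
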